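/- Let x0 ≥ 1 and f : [x0, ∞) → ℝ be twice continuously differentiable with f, f', f'' > 0, and suppose that for all x0 ≤ x ≤ y ≤ 2x we have f''(x)/2 ≤ f''(y) ≤ f''(x). Then for all x ≥ x0 we have f'(x) − f'(x0) ≤ 2·x·f''(x)·log x. -/
import Mathlib

theorem stmt_2 (x0 : ℝ) (f f' f'' : ℝ → ℝ)
    (hx0 : 1 ≤ x0)
    (hd1 : ∀ x ∈ Set.Ici x0, HasDerivAt f (f' x) x)
    (hd2 : ∀ x ∈ Set.Ici x0, HasDerivAt f' (f'' x) x)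
    (hcont : ContinuousOn f'' (Set.Ici x0))
    (hpos : ∀ x ∈ Set.Ici x0, 0 < f x ∧ 0 < f' x ∧ 0 < f'' x)
    (hdbl : ∀ x y : ℝ, x0 ≤ x → x ≤ y → y ≤ 2 * x → f'' x / 2 ≤ f'' y ∧ f'' y ≤ f'' x) :
    ∀ x : ℝ, x0 ≤ x → f' x - f' x0 ≤ 2 * x * f'' x * Real.log x := by
  -- doubling step, iterated
  have hstep : ∀ n : ℕ, ∀ t y : ℝ, x0 ≤ t → t ≤ y → y ≤ 2 ^ n * t →
      f'' t ≤ 2 ^ n * f'' y := by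
    intro n
    induction n with
    | zero =>
      intro t y ht hty hle
      simp only [pow_zero, one_mul] at hle ⊢
      have : t = y := le_antisymm hty hle
      simp [this]
    | succ k ih =>
      intro t y ht hty hle
      have ht0 : (0:ℝ) < t := lt_of_lt_of_le one_pos (le_trans hx0 ht)
      have hy : 0 < f'' y := (hpos y (le_trans ht hty)).2.2
      by_cases h : y ≤ 2 ^ k * t
      · have h1 := ih t y ht hty h
        have h2 : (2:ℝ) ^ k ≤ 2 ^ (k+1) := by
          apply pow_le_pow_right₀ (by norm_num) (Nat.le_succ k)
        nlinarith
      · push_neg at h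
        set z := 2 ^ k * t with hz
        have h2k : (1:ℝ) ≤ 2 ^ k := one_le_pow₀ (by norm_num)
        have htz : t ≤ z := by nlinarith
        have hxz : x0 ≤ z := le_trans ht htz
        have h1 : f'' t ≤ 2 ^ k * f'' z := ih t z ht htz (le_refl _)
        have h2 : f'' z / 2 ≤ f'' y := by
          refine (hdbl z y hxz h.le ?_).1
          have : y ≤ 2 ^ (k+1) * t := hle
          rw [hz]; ring_nf; ring_nf at this; linarith
        have hk0 : (0:ℝ) < 2 ^ k := by positivity
        have : (2:ℝ) ^ (k+1) = 2 ^ k * 2 := pow_succ 2 k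
        nlinarith
  intro x hx
  have hx1 : (1:ℝ) ≤ x := le_trans hx0 hx
  have hfx : 0 < f'' x := (hpos x hx).2.2
  -- key estimate
  have hkey : ∀ t : ℝ, x0 ≤ t → t ≤ x → t * f'' t ≤ 2 * x * f'' x := by
    intro t ht htx
    have ht0 : (0:ℝ) < t := lt_of_lt_of_le one_pos (le_trans hx0 ht)
    have ht1 : (1:ℝ) ≤ t := le_trans hx0 ht
    have hex : ∃ n : ℕ, x ≤ 2 ^ n * t := by
      obtain ⟨n, hn⟩ := pow_unbounded_of_one_lt x (by norm_num : (1:ℝ) < 2)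
      exact ⟨n, by nlinarith⟩
    classical
    set n := Nat.find hex with hn
    have hspec : x ≤ 2 ^ n * t := Nat.find_spec hex
    have hb : f'' t ≤ 2 ^ n * f'' x := hstep n t x ht htx hspec
    have hsmall : 2 ^ n * t ≤ 2 * x := by
      rcases Nat.eq_zero_or_pos n with h0 | hpos'
      · rw [h0]; simp; nlinarith
      · obtain ⟨k, hk⟩ := Nat.exists_eq_succ_of_ne_zero hpos'.ne'
        have hmin : ¬ x ≤ 2 ^ k * t := Nat.find_min hex (by omega)
        push_neg at hmin
        have : (2:ℝ) ^ n = 2 ^ k * 2 := by rw [hk]; exact pow_succ 2 k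
        nlinarith
    nlinarith [pow_pos (by norm_num : (0:ℝ) < 2) n]
  -- the comparison function
  set c := 2 * x * f'' x with hc
  have hc0 : 0 < c := by positivity
  set F : ℝ → ℝ := fun t => c * Real.log t - (f' t - f' x0) with hF
  have hFd : ∀ t ∈ Set.Ici x0, HasDerivAt F (c * t⁻¹ - f'' t) t := by
    intro t ht
    have ht0 : t ≠ 0 := by
      have : (0:ℝ) < t := lt_of_lt_of_le one_pos (le_trans hx0 ht)
      exact this.ne'
    exact ((Real.hasDerivAt_log ht0).const_mul c).sub ((hd2 t ht).sub_const _)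
  have hmono : MonotoneOn F (Set.Icc x0 x) := by
    apply monotoneOn_of_deriv_nonneg (convex_Icc x0 x)
    · intro t ht
      exact (hFd t ht.1).continuousAt.continuousWithinAt
    · intro t ht
      rw [interior_Icc] at ht
      exact ((hFd t ht.1.le).differentiableAt).differentiableWithinAt
    · intro t ht
      rw [interior_Icc] at ht
      rw [(hFd t ht.1.le).deriv]
      have ht0 : (0:ℝ) < t := lt_of_lt_of_le one_pos (le_trans hx0 ht.1.le)
      have hk := hkey t ht.1.le ht.2.le
      rw [sub_nonneg, mul_comm c, ← div_eq_inv_mul, le_div_iff₀ ht0]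
      nlinarith
  have hFle : F x0 ≤ F x := hmono (Set.left_mem_Icc.mpr hx) (Set.right_mem_Icc.mpr hx) hx
  have hlog0 : 0 ≤ Real.log x0 := Real.log_nonneg hx0
  have : F x0 = c * Real.log x0 - 0 := by simp [hF]
  simp only [hF] at hFle
  nlinarith [mul_nonneg hc0.le hlog0]
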